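/- Commutant theorem: for every subgroup Λ of ZMod N × ZMod N, a linear operator A on ℂ^N satisfies A ∘ π(λ) = π(λ) ∘ A for all λ ∈ Λ if and only if A belongs to the linear span of {π(μ) : μ ∈ Λ°}. -/

import Mathlib

open Complex Finset

/-- The time-frequency shift `π(k,r)` on `ℂ^N ≅ (ZMod N → ℂ)`:
`(π(k,r)f)(j) = e^{2πi·rj/N} · f(j−k)`. -/
noncomputable def tfShift (N : ℕ) (k r : ZMod N) : (ZMod N → ℂ) →ₗ[ℂ] (ZMod N → ℂ) where
  toFun f := fun j => Complex.exp (2 * Real.pi * Complex.I * (((r * j).val : ℂ) / (N : ℂ))) * f (j - k)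
  map_add' f g := by
    funext j
    simp [mul_add]
  map_smul' c f := by
    funext j
    simp [Pi.smul_apply, smul_eq_mul]
    ring

/-- The inner product `⟨f,g⟩ = ∑ⱼ f(j)·conj(g(j))`, linear in the first argument. -/
noncomputable def inn {N : ℕ} [NeZero N] (f g : ZMod N → ℂ) : ℂ :=
  ∑ j, f j * starRingEnd ℂ (g j)

/-- The short-time Fourier transform `V_g f(k,r) = ⟨f, π(k,r)g⟩`. -/
noncomputable def stft {N : ℕ} [NeZero N] (g f : ZMod N → ℂ) (k r : ZMod N) : ℂ :=
  inn f (tfShift N k r g)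

/-- The adjoint subgroup `Λ° = {(k,r) : l·r − k·s = 0 in ZMod N for all (l,s) ∈ Λ}`,
as a set. -/
def adjSet {N : ℕ} (Λ : AddSubgroup (ZMod N × ZMod N)) : Set (ZMod N × ZMod N) :=
  {p | ∀ q ∈ Λ, q.1 * p.2 - p.1 * q.2 = 0}

/-- The underlying finite set of a subgroup `Λ` of `ZMod N × ZMod N`. -/
noncomputable def subFinset {N : ℕ} [NeZero N] (Λ : AddSubgroup (ZMod N × ZMod N)) :
    Finset (ZMod N × ZMod N) :=
  Set.Finite.toFinset (Set.toFinite (Λ : Set (ZMod N × ZMod N)))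

/-- The underlying finite set of the adjoint subgroup `Λ°`. -/
noncomputable def adjFinset {N : ℕ} [NeZero N] (Λ : AddSubgroup (ZMod N × ZMod N)) :
    Finset (ZMod N × ZMod N) :=
  Set.Finite.toFinset (Set.toFinite (adjSet Λ))

/-- The rank-one operator `f ↦ ⟨f,h⟩·g`. -/
noncomputable def rankOne {N : ℕ} [NeZero N] (g h : ZMod N → ℂ) :
    (ZMod N → ℂ) →ₗ[ℂ] (ZMod N → ℂ) where
  toFun f := inn f h • g
  map_add' f f' := by
    simp [inn, add_mul, Finset.sum_add_distrib, add_smul]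
  map_smul' c f := by
    simp [inn, Finset.mul_sum, mul_assoc, mul_smul, smul_smul]

/-- The Gabor frame-type operator `S_{g,h,Λ} f = ∑_{λ∈Λ} ⟨f, π(λ)h⟩ · π(λ)g`. -/
noncomputable def gaborTypeOp (N : ℕ) [NeZero N] (Λ : AddSubgroup (ZMod N × ZMod N))
    (g h : ZMod N → ℂ) : (ZMod N → ℂ) →ₗ[ℂ] (ZMod N → ℂ) :=
  ∑ lam ∈ subFinset Λ, rankOne (tfShift N lam.1 lam.2 g) (tfShift N lam.1 lam.2 h)

noncomputable def ee (N : ℕ) (a : ZMod N) : ℂ :=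
  Complex.exp (2 * Real.pi * Complex.I * ((a.val : ℂ) / (N : ℂ)))

lemma ee_int (N : ℕ) [NeZero N] (z : ℤ) :
    ee N (z : ZMod N) = Complex.exp (2 * Real.pi * Complex.I * ((z : ℂ) / (N : ℂ))) := by
  set a : ZMod N := (z : ZMod N)
  have h : (N:ℤ) ∣ z - (a.val : ℤ) := by
    rw [← ZMod.intCast_zmod_eq_zero_iff_dvd, Int.cast_sub, Int.cast_natCast,
      ZMod.natCast_rightInverse a]
    simp [a]
  obtain ⟨m, hm⟩ := h
  have hz : (z : ℂ) = (a.val : ℂ) + m * N := by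
    have h2 : (z : ℤ) = a.val + N * m := by omega
    have := congrArg (Int.cast : ℤ → ℂ) h2
    push_cast at this
    rw [this]; ring
  have hN : (N : ℂ) ≠ 0 := Nat.cast_ne_zero.mpr (NeZero.ne N)
  rw [ee, hz]
  rw [show 2 * (Real.pi:ℂ) * I * (((a.val:ℂ) + m * N) / N)
      = 2 * (Real.pi:ℂ) * I * ((a.val:ℂ) / N) + m * (2 * Real.pi * I) by
    field_simp]
  rw [Complex.exp_add, Complex.exp_int_mul_two_pi_mul_I, mul_one]

lemma ee_natCast (N : ℕ) [NeZero N] (a : ZMod N) : ee N a = ee N ((a.val : ℤ) : ZMod N) := by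
  congr 1
  rw [Int.cast_natCast, ZMod.natCast_rightInverse a]

lemma ee_add (N : ℕ) [NeZero N] (a b : ZMod N) : ee N (a + b) = ee N a * ee N b := by
  have hN : (N : ℂ) ≠ 0 := Nat.cast_ne_zero.mpr (NeZero.ne N)
  rw [ee_natCast N a, ee_natCast N b, ee_natCast N (a+b)]
  rw [show ((((a+b).val : ℤ)) : ZMod N) = ((((a.val : ℤ) + (b.val : ℤ) : ℤ)) : ZMod N) by
    push_cast
    rw [ZMod.natCast_rightInverse a, ZMod.natCast_rightInverse b, ZMod.natCast_rightInverse (a+b)]]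
  rw [ee_int, ee_int, ee_int, ← Complex.exp_add]
  congr 1
  push_cast
  field_simp

lemma ee_zero (N : ℕ) [NeZero N] : ee N 0 = 1 := by
  simp [ee]

lemma ee_ne_one (N : ℕ) [NeZero N] {a : ZMod N} (ha : a ≠ 0) : ee N a ≠ 1 := by
  intro h
  rw [ee, Complex.exp_eq_one_iff] at h
  obtain ⟨n, hn⟩ := h
  have hN : (N : ℂ) ≠ 0 := Nat.cast_ne_zero.mpr (NeZero.ne N)
  have hpi : (2 * (Real.pi:ℂ) * I) ≠ 0 := by
    simp [Real.pi_ne_zero, Complex.I_ne_zero, Complex.ofReal_ne_zero]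
  have h3 : 2 * (Real.pi:ℂ) * I * ((a.val:ℂ)/N) = 2 * (Real.pi:ℂ) * I * ((n:ℂ)) := by
    rw [hn]; ring
  have h4 := mul_left_cancel₀ hpi h3
  have h2 : ((a.val : ℂ)) = n * N := (div_eq_iff hN).mp h4
  have h5 : (a.val : ℤ) = n * N := by exact_mod_cast h2
  have hv : 0 < a.val := Nat.pos_of_ne_zero (fun h0 => ha ((ZMod.val_eq_zero a).mp h0))
  have hvN : a.val < N := ZMod.val_lt a
  have hdvd : N ∣ a.val := by
    have : (N:ℤ) ∣ (a.val : ℤ) := ⟨n, by rw [h5, mul_comm]⟩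
    exact_mod_cast this
  exact absurd (Nat.le_of_dvd hv hdvd) (by omega)

lemma ee_sum (N : ℕ) [NeZero N] (m : ZMod N) :
    ∑ j : ZMod N, ee N (m * j) = if m = 0 then (N:ℂ) else 0 := by
  rcases eq_or_ne m 0 with hm | hm
  · simp [hm, ee_zero]
  · simp only [hm, if_false]
    have key : ∑ j : ZMod N, ee N (m * j) = (∑ j : ZMod N, ee N (m * j)) * ee N m := by
      rw [Finset.sum_mul]
      refine (Fintype.sum_equiv (Equiv.addRight (1 : ZMod N)) _ _ ?_).symm
      intro j
      simp only [Equiv.coe_addRight]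
      rw [← ee_add]
      congr 1
      ring
    have := sub_eq_zero.mpr key
    rw [← mul_one_sub] at this
    rcases mul_eq_zero.mp this with h | h
    · exact h
    · exact absurd (by linear_combination -h : ee N m = 1) (ee_ne_one N hm)

lemma tfShift_apply' (N : ℕ) (k r : ZMod N) (f : ZMod N → ℂ) (j : ZMod N) :
    tfShift N k r f j = ee N (r * j) * f (j - k) := rfl

lemma ee_sum' (N : ℕ) [NeZero N] (m : ZMod N) :
    ∑ r : ZMod N, ee N (r * m) = if m = 0 then (N:ℂ) else 0 := by
  rw [← ee_sum N m]
  exact Finset.sum_congr rfl fun r _ => by rw [mul_comm]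

lemma apply_eq_sum {N : ℕ} [NeZero N] (A : (ZMod N → ℂ) →ₗ[ℂ] (ZMod N → ℂ))
    (f : ZMod N → ℂ) (j : ZMod N) :
    A f j = ∑ i, f i * A (Pi.single i 1) j := by
  have hf : f = ∑ i, f i • (Pi.single i 1 : ZMod N → ℂ) := by
    funext x
    simp [Finset.sum_apply, Pi.single_apply]
  conv_lhs => rw [hf, map_sum]
  simp [Finset.sum_apply]

noncomputable def coef {N : ℕ} [NeZero N] (A : (ZMod N → ℂ) →ₗ[ℂ] (ZMod N → ℂ))
    (p : ZMod N × ZMod N) : ℂ :=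
  (N:ℂ)⁻¹ * ∑ j, ee N (-(p.2 * j)) * A (Pi.single (j - p.1) 1) j

lemma expand {N : ℕ} [NeZero N] (A : (ZMod N → ℂ) →ₗ[ℂ] (ZMod N → ℂ)) :
    A = ∑ p : ZMod N × ZMod N, coef A p • tfShift N p.1 p.2 := by
  have hN : (N : ℂ) ≠ 0 := Nat.cast_ne_zero.mpr (NeZero.ne N)
  apply LinearMap.ext
  intro f
  funext j
  rw [LinearMap.sum_apply, Finset.sum_apply]
  have step : ∀ p : ZMod N × ZMod N,
      (coef A p • tfShift N p.1 p.2) f j = coef A p * (ee N (p.2 * j) * f (j - p.1)) := by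
    intro p
    rw [LinearMap.smul_apply, Pi.smul_apply, smul_eq_mul, tfShift_apply']
  rw [Finset.sum_congr rfl fun p _ => step p, Fintype.sum_prod_type]
  have inner : ∀ k : ZMod N,
      ∑ r : ZMod N, coef A (k, r) * (ee N (r * j) * f (j - k))
        = f (j - k) * A (Pi.single (j - k) 1) j := by
    intro k
    have h1 : ∀ r : ZMod N, coef A (k, r) * (ee N (r * j) * f (j - k))
        = ∑ j', f (j - k) * (N:ℂ)⁻¹ * (A (Pi.single (j' - k) 1) j' * ee N (r * (j - j'))) := by
      intro r
      rw [coef, mul_assoc, Finset.sum_mul, Finset.mul_sum]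
      refine Finset.sum_congr rfl fun j' _ => ?_
      have : ee N (r * (j - j')) = ee N (-(r * j')) * ee N (r * j) := by
        rw [← ee_add]; congr 1; ring
      rw [this]; ring
    rw [Finset.sum_congr rfl fun r _ => h1 r, Finset.sum_comm]
    have h2 : ∀ j' : ZMod N,
        ∑ r : ZMod N, f (j - k) * (N:ℂ)⁻¹ * (A (Pi.single (j' - k) 1) j' * ee N (r * (j - j')))
          = if j' = j then f (j - k) * (N:ℂ)⁻¹ * (A (Pi.single (j' - k) 1) j' * N) else 0 := by
      intro j'
      rw [← Finset.mul_sum, ← Finset.mul_sum, ee_sum']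
      by_cases h : j' = j
      · simp [h]
      · have : ¬ (j - j' = 0) := fun hc => h (by linear_combination -hc)
        simp [this, h]
    rw [Finset.sum_congr rfl fun j' _ => h2 j', Finset.sum_ite_eq' Finset.univ j]
    simp only [Finset.mem_univ, if_true]
    field_simp
  rw [Finset.sum_congr rfl fun k _ => inner k, apply_eq_sum A f j]
  exact (Fintype.sum_equiv (Equiv.subLeft j) _ _ (fun k => by simp)).symm

lemma tfShift_comm {N : ℕ} [NeZero N] {k r l s : ZMod N} (h : l * r - k * s = 0) :
    tfShift N k r ∘ₗ tfShift N l s = tfShift N l s ∘ₗ tfShift N k r := by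
  apply LinearMap.ext
  intro f
  funext j
  simp only [LinearMap.comp_apply, tfShift_apply']
  rw [← mul_assoc, ← mul_assoc, ← ee_add, ← ee_add]
  rw [show j - k - l = j - l - k by ring]
  congr 2
  linear_combination h

lemma coef_vanish {N : ℕ} [NeZero N] {Λ : AddSubgroup (ZMod N × ZMod N)}
    {A : (ZMod N → ℂ) →ₗ[ℂ] (ZMod N → ℂ)}
    (hA : ∀ lam ∈ Λ, A ∘ₗ tfShift N lam.1 lam.2 = tfShift N lam.1 lam.2 ∘ₗ A)
    {p : ZMod N × ZMod N} (hp : p ∉ adjSet Λ) : coef A p = 0 := by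
  obtain ⟨k, r⟩ := p
  simp only [adjSet, Set.mem_setOf_eq, not_forall] at hp
  obtain ⟨q, hqΛ, hq⟩ := hp
  obtain ⟨l, s⟩ := q
  simp only at hq
  -- matrix relation from commutation with (l,s)
  have hrel : ∀ i j : ZMod N,
      ee N (s * (i + l)) * A (Pi.single (i + l) 1) j = ee N (s * j) * A (Pi.single i 1) (j - l) := by
    intro i j
    have h := congrFun (congrArg (fun B => B (Pi.single i 1)) (hA (l, s) hqΛ)) j
    simp only [LinearMap.comp_apply] at h
    have hshift : tfShift N l s (Pi.single i 1) = ee N (s * (i + l)) • (Pi.single (i + l) 1 : ZMod N → ℂ) := by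
      funext j'
      rw [tfShift_apply', Pi.smul_apply, smul_eq_mul]
      rcases eq_or_ne j' (i + l) with hj | hj
      · rw [hj]
        simp [Pi.single_apply]
      · have : j' - l ≠ i := fun hc => hj (by linear_combination hc)
        simp [Pi.single_apply, this, hj]
    rw [hshift, map_smul] at h
    rw [tfShift_apply'] at h
    calc ee N (s * (i + l)) * A (Pi.single (i + l) 1) j
        = (ee N (s * (i + l)) • A (Pi.single (i + l) 1)) j := by simp
      _ = ee N (s * j) * A (Pi.single i 1) (j - l) := by rw [h]
  -- diagonal relation: M(j, j-k) = ee(s*k) * M(j-l, j-l-k)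
  have hdiag : ∀ j : ZMod N,
      A (Pi.single (j - k) 1) j = ee N (s * k) * A (Pi.single (j - l - k) 1) (j - l) := by
    intro j
    have h := hrel (j - l - k) j
    rw [show j - l - k + l = j - k by ring] at h
    have hmul := congrArg (fun z => ee N (-(s * (j - k))) * z) h
    rw [← mul_assoc, ← mul_assoc, ← ee_add, ← ee_add] at hmul
    rw [show -(s * (j - k)) + s * (j - k) = 0 by ring, ee_zero, one_mul] at hmul
    rw [hmul]
    congr 2
    ring
  -- now compute coef
  have key : coef A (k, r) = ee N (s * k - r * l) * coef A (k, r) := by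
    have hS : ∑ j, ee N (-(r * j)) * A (Pi.single (j - k) 1) j
        = ee N (s * k - r * l) * ∑ j, ee N (-(r * j)) * A (Pi.single (j - k) 1) j := by
      rw [Finset.mul_sum]
      calc ∑ j, ee N (-(r * j)) * A (Pi.single (j - k) 1) j
          = ∑ j, ee N (-(r * j)) * (ee N (s * k) * A (Pi.single (j - l - k) 1) (j - l)) :=
            Finset.sum_congr rfl fun j _ => by rw [hdiag j]
        _ = ∑ j, ee N (s * k - r * l) * (ee N (-(r * j)) * A (Pi.single (j - k) 1) j) := by
            refine (Fintype.sum_equiv (Equiv.addRight (l : ZMod N)) _ _ ?_).symm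
            intro j
            simp only [Equiv.coe_addRight]
            rw [show j + l - l = j by ring]
            rw [← mul_assoc, ← mul_assoc, ← ee_add, ← ee_add]
            congr 2
            ring
    simp only [coef]
    conv_lhs => rw [hS]
    ring
  have hne : ee N (s * k - r * l) ≠ 1 := by
    apply ee_ne_one
    intro hc
    exact hq (by linear_combination -hc)
  have := sub_eq_zero.mpr key
  rw [show coef A (k,r) - ee N (s*k - r*l) * coef A (k,r) = coef A (k,r) * (1 - ee N (s*k-r*l)) by ring] at this
  rcases mul_eq_zero.mp this with h | h
  · exact h
  · exact absurd (by linear_combination -h : ee N (s*k-r*l) = 1) hne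

/-- **Commutant theorem**: a linear operator `A` on `ℂ^N` commutes with `π(λ)` for all
`λ ∈ Λ` if and only if `A` belongs to the linear span of `{π(μ) : μ ∈ Λ°}`. -/
theorem commutant_eq_span_adjoint (N : ℕ) [NeZero N]
    (Λ : AddSubgroup (ZMod N × ZMod N)) (A : (ZMod N → ℂ) →ₗ[ℂ] (ZMod N → ℂ)) :
    (∀ lam ∈ Λ, A ∘ₗ tfShift N lam.1 lam.2 = tfShift N lam.1 lam.2 ∘ₗ A) ↔
      A ∈ Submodule.span ℂ
        ((fun p : ZMod N × ZMod N => tfShift N p.1 p.2) '' adjSet Λ) := by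
  constructor
  · intro hA
    rw [expand A]
    apply Submodule.sum_mem
    intro p _
    by_cases hp : p ∈ adjSet Λ
    · exact Submodule.smul_mem _ _ (Submodule.subset_span ⟨p, hp, rfl⟩)
    · rw [coef_vanish hA hp, zero_smul]
      exact Submodule.zero_mem _
  · intro hA
    induction hA using Submodule.span_induction with
    | mem B hB =>
      obtain ⟨μ, hμ, rfl⟩ := hB
      intro lam hlam
      exact tfShift_comm (hμ lam hlam)
    | zero => intro lam _; simp
    | add x y hx hy ihx ihy =>
      intro lam hlam
      simp [LinearMap.add_comp, LinearMap.comp_add, ihx lam hlam, ihy lam hlam]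
    | smul c x hx ih =>
      intro lam hlam
      simp [LinearMap.smul_comp, LinearMap.comp_smul, ih lam hlam]
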